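/- arXiv:1509.07127 — 2 statements merged into one kernel-verified Lean document; each statement's English description precedes it below -/
import Mathlib

section
/- For density operators ρ, σ on a finite-dimensional Hilbert space A with supp(ρ) ⊆ supp(σ), and a quantum channel N from A to B with isometric extension U : A → B⊗E, the quantity −2 log‖([N(ρ)]^{1/2}[N(σ)]^{−1/2} ⊗ id_E) U σ^{1/2} ρ^{1/2}‖₁ equals −2 log F(ρ, P_{σ,N}(N(ρ))), where P_{σ,N} is the Petz recovery map for σ and N. -/
open scoped ENNReal Kronecker ComplexOrder
open Matrix MeasureTheory

/-- Apply a real function to a Hermitian matrix via the spectral decomposition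
(junk value `0` if the matrix is not Hermitian). -/
noncomputable def mfun {n : Type*} [Fintype n] [DecidableEq n] (f : ℝ → ℂ)
    (M : Matrix n n ℂ) : Matrix n n ℂ :=
  if h : M.IsHermitian then
    (h.eigenvectorUnitary : Matrix n n ℂ) *
      Matrix.diagonal (fun i => f (h.eigenvalues i)) *
      (star (h.eigenvectorUnitary : Matrix n n ℂ))
  else 0

/-- Matrix square root of a positive semidefinite matrix. -/
noncomputable def msqrt {n : Type*} [Fintype n] [DecidableEq n] (M : Matrix n n ℂ) :
    Matrix n n ℂ :=
  mfun (fun x => (Real.sqrt x : ℂ)) M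

/-- Inverse square root, taken on the support. -/
noncomputable def minvsqrt {n : Type*} [Fintype n] [DecidableEq n] (M : Matrix n n ℂ) :
    Matrix n n ℂ :=
  mfun (fun x : ℝ => if x ≤ 0 then (0:ℂ) else ((Real.sqrt x)⁻¹ : ℂ)) M

/-- Matrix logarithm (with `log 0 = 0` convention on the kernel). -/
noncomputable def mlog {n : Type*} [Fintype n] [DecidableEq n] (M : Matrix n n ℂ) :
    Matrix n n ℂ :=
  mfun (fun x => (Real.log x : ℂ)) M

/-- Complex power `M ^ z` of a positive semidefinite matrix, taken on the support. -/
noncomputable def mcpow {n : Type*} [Fintype n] [DecidableEq n] (z : ℂ)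
    (M : Matrix n n ℂ) : Matrix n n ℂ :=
  mfun (fun x : ℝ => if x ≤ 0 then (0:ℂ) else (x : ℂ) ^ z) M

/-- Projection onto the support of a positive semidefinite matrix. -/
noncomputable def suppProj {n : Type*} [Fintype n] [DecidableEq n] (M : Matrix n n ℂ) :
    Matrix n n ℂ :=
  mfun (fun x : ℝ => if x ≤ 0 then (0:ℂ) else 1) M

/-- Singular values of a (rectangular) complex matrix. -/
noncomputable def singVals {m n : Type*} [Fintype m] [Fintype n] [DecidableEq n]
    (L : Matrix m n ℂ) : n → ℝ :=
  fun i => Real.sqrt ((Matrix.posSemidef_conjTranspose_mul_self L).1.eigenvalues i)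

/-- Trace norm (Schatten 1-norm). -/
noncomputable def trNorm {m n : Type*} [Fintype m] [Fintype n] [DecidableEq n]
    (L : Matrix m n ℂ) : ℝ :=
  ∑ i, singVals L i

/-- Schatten `p`-norm, `p ∈ [1,∞]`. -/
noncomputable def schatten {m n : Type*} [Fintype m] [Fintype n] [DecidableEq n]
    (p : ℝ≥0∞) (L : Matrix m n ℂ) : ℝ :=
  if p = ∞ then ⨆ i, singVals L i
  else (∑ i, singVals L i ^ p.toReal) ^ (1 / p.toReal)

/-- Operator norm (largest singular value). -/
noncomputable def opNorm {m n : Type*} [Fintype m] [Fintype n] [DecidableEq n]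
    (L : Matrix m n ℂ) : ℝ :=
  ⨆ i, singVals L i

/-- Quantum relative entropy `D(ρ‖σ) = tr(ρ (log ρ - log σ))`. -/
noncomputable def relEnt {n : Type*} [Fintype n] [DecidableEq n]
    (ρ σ : Matrix n n ℂ) : ℝ :=
  ((ρ * (mlog ρ - mlog σ)).trace).re

/-- Von Neumann entropy. -/
noncomputable def vnEnt {n : Type*} [Fintype n] [DecidableEq n]
    (ρ : Matrix n n ℂ) : ℝ :=
  -((ρ * mlog ρ).trace).re

/-- Fidelity `F(ρ,σ) = ‖√ρ √σ‖₁`. -/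
noncomputable def fid {n : Type*} [Fintype n] [DecidableEq n]
    (ρ σ : Matrix n n ℂ) : ℝ :=
  trNorm (msqrt ρ * msqrt σ)

/-- `supp ρ ⊆ supp σ`, expressed via kernels (for PSD matrices). -/
def suppLE {n : Type*} [Fintype n] (ρ σ : Matrix n n ℂ) : Prop :=
  ∀ v, σ.mulVec v = 0 → ρ.mulVec v = 0

/-- Trace-preserving linear map. -/
def IsTP {m n : Type*} [Fintype m] [Fintype n]
    (Φ : Matrix m m ℂ →ₗ[ℂ] Matrix n n ℂ) : Prop :=
  ∀ M, (Φ M).trace = M.trace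

/-- Completely positive map, via the Kraus representation. -/
def IsCP {m n : Type*} [Fintype m] [Fintype n]
    (Φ : Matrix m m ℂ →ₗ[ℂ] Matrix n n ℂ) : Prop :=
  ∃ (k : ℕ) (K : Fin k → Matrix n m ℂ), ∀ M, Φ M = ∑ i, K i * M * (K i)ᴴ

/-- `Φdag` is the adjoint of `Φ` w.r.t. the Hilbert–Schmidt inner product. -/
def IsAdjointPair {m n : Type*} [Fintype m] [Fintype n]
    (Φ : Matrix m m ℂ →ₗ[ℂ] Matrix n n ℂ)
    (Φdag : Matrix n n ℂ →ₗ[ℂ] Matrix m m ℂ) : Prop :=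
  ∀ X Y, ((Xᴴ * Φ Y).trace) = (((Φdag X)ᴴ * Y).trace)

/-- Petz recovery map `P_{σ,N}` where `τ = N(σ)` and `Φdag = N†`. -/
noncomputable def petz {m n : Type*} [Fintype m] [DecidableEq m] [Fintype n] [DecidableEq n]
    (σ : Matrix m m ℂ) (τ : Matrix n n ℂ)
    (Φdag : Matrix n n ℂ →ₗ[ℂ] Matrix m m ℂ) (X : Matrix n n ℂ) : Matrix m m ℂ :=
  msqrt σ * Φdag (minvsqrt τ * X * minvsqrt τ) * msqrt σ

/-- Rotated Petz recovery map `R^t_{σ,N}`. -/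
noncomputable def rotPetz {m n : Type*} [Fintype m] [DecidableEq m] [Fintype n] [DecidableEq n]
    (t : ℝ) (σ : Matrix m m ℂ) (τ : Matrix n n ℂ)
    (Φdag : Matrix n n ℂ →ₗ[ℂ] Matrix m m ℂ) (X : Matrix n n ℂ) : Matrix m m ℂ :=
  mcpow (-(Complex.I * t)) σ *
    petz σ τ Φdag (mcpow (Complex.I * t) τ * X * mcpow (-(Complex.I * t)) τ) *
    mcpow (Complex.I * t) σ

/-- Partial trace over the second (environment) factor. -/
noncomputable def ptraceE {b e : Type*} [Fintype e]
    (M : Matrix (b × e) (b × e) ℂ) : Matrix b b ℂ :=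
  fun i j => ∑ k : e, M (i, k) (j, k)

/-- The density `β₀(t) = (π/2) (cosh(π t) + 1)⁻¹`. -/
noncomputable def beta0 (t : ℝ) : ℝ :=
  Real.pi / 2 * (Real.cosh (Real.pi * t) + 1)⁻¹


section Aux
open Polynomial
variable {n : Type*} [Fintype n] [DecidableEq n]

lemma mfun_eq (f : ℝ → ℂ) {M : Matrix n n ℂ} (h : M.IsHermitian) :
    mfun f M = (h.eigenvectorUnitary : Matrix n n ℂ) *
      Matrix.diagonal (fun i => f (h.eigenvalues i)) *
      (star (h.eigenvectorUnitary : Matrix n n ℂ)) := dif_pos h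

lemma star_mul_self_eigU {M : Matrix n n ℂ} (h : M.IsHermitian) :
    (star (h.eigenvectorUnitary : Matrix n n ℂ)) * (h.eigenvectorUnitary : Matrix n n ℂ) = 1 :=
  h.eigenvectorUnitary.2.1

lemma mul_star_self_eigU {M : Matrix n n ℂ} (h : M.IsHermitian) :
    (h.eigenvectorUnitary : Matrix n n ℂ) * (star (h.eigenvectorUnitary : Matrix n n ℂ)) = 1 :=
  h.eigenvectorUnitary.2.2

lemma mfun_conjTranspose (f : ℝ → ℂ) (hf : ∀ x, star (f x) = f x) {M : Matrix n n ℂ}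
    (h : M.IsHermitian) : (mfun f M)ᴴ = mfun f M := by
  rw [mfun_eq f h]
  have : star (h.eigenvectorUnitary : Matrix n n ℂ) = (h.eigenvectorUnitary : Matrix n n ℂ)ᴴ := rfl
  rw [this, conjTranspose_mul, conjTranspose_mul, conjTranspose_conjTranspose,
    diagonal_conjTranspose]
  simp only [Pi.star_def, hf, mul_assoc]

lemma mfun_mul_mfun (f g : ℝ → ℂ) {M : Matrix n n ℂ} (h : M.IsHermitian) :
    mfun f M * mfun g M = (h.eigenvectorUnitary : Matrix n n ℂ) *
      Matrix.diagonal (fun i => f (h.eigenvalues i) * g (h.eigenvalues i)) *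
      (star (h.eigenvectorUnitary : Matrix n n ℂ)) := by
  rw [mfun_eq f h, mfun_eq g h]
  simp only [mul_assoc]
  rw [← mul_assoc (star _) _, star_mul_self_eigU h, one_mul, ← mul_assoc (Matrix.diagonal _),
    diagonal_mul_diagonal]

lemma trace_mfun (f : ℝ → ℂ) {M : Matrix n n ℂ} (h : M.IsHermitian) :
    (mfun f M).trace = ∑ i, f (h.eigenvalues i) := by
  rw [mfun_eq f h, Matrix.trace_mul_cycle, star_mul_self_eigU h, one_mul, trace_diagonal]

lemma msqrt_conjTranspose {M : Matrix n n ℂ} (h : M.IsHermitian) : (msqrt M)ᴴ = msqrt M :=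
  mfun_conjTranspose _ (fun x => by simp [Complex.star_def]) h

lemma minvsqrt_conjTranspose {M : Matrix n n ℂ} (h : M.IsHermitian) :
    (minvsqrt M)ᴴ = minvsqrt M :=
  mfun_conjTranspose _ (fun x => by split <;> simp [Complex.star_def]) h

lemma msqrt_mul_self {M : Matrix n n ℂ} (h : M.PosSemidef) : msqrt M * msqrt M = M := by
  unfold msqrt
  rw [mfun_mul_mfun _ _ h.1]
  have : ∀ i, ((Real.sqrt (h.1.eigenvalues i) : ℂ) * (Real.sqrt (h.1.eigenvalues i) : ℂ))
      = ((h.1.eigenvalues i : ℝ) : ℂ) := by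
    intro i
    rw [← Complex.ofReal_mul, Real.mul_self_sqrt (h.eigenvalues_nonneg i)]
  simp only [this]
  exact h.1.spectral_theorem.symm

lemma det_smul_one_sub_comm {m : Type*} [Fintype m] [DecidableEq m]
    (A B : Matrix m m ℂ) (z : ℂ) :
    (z • (1 : Matrix m m ℂ) - A * B).det = (z • (1 : Matrix m m ℂ) - B * A).det := by
  rcases eq_or_ne z 0 with rfl | hz
  · simp only [zero_smul, zero_sub, Matrix.det_neg, Matrix.det_mul]
    ring
  · have h1 : z • (1 : Matrix m m ℂ) - A * B = z • ((1 : Matrix m m ℂ) - (z⁻¹ • A) * B) := by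
      rw [smul_sub, Matrix.smul_mul, smul_smul, mul_inv_cancel₀ hz, one_smul]
    have h2 : z • (1 : Matrix m m ℂ) - B * A = z • ((1 : Matrix m m ℂ) - B * (z⁻¹ • A)) := by
      rw [smul_sub, Matrix.mul_smul, smul_smul, mul_inv_cancel₀ hz, one_smul]
    rw [h1, h2, Matrix.det_smul, Matrix.det_smul, Matrix.det_one_sub_mul_comm]

lemma det_smul_one_sub_herm {M : Matrix n n ℂ} (h : M.IsHermitian) (z : ℂ) :
    (z • (1 : Matrix n n ℂ) - M).det = ∏ i, (z - (h.eigenvalues i : ℂ)) := by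
  set V := (h.eigenvectorUnitary : Matrix n n ℂ) with hV
  have key : z • (1 : Matrix n n ℂ) - M =
      V * (z • (1 : Matrix n n ℂ) - Matrix.diagonal (fun i => (h.eigenvalues i : ℂ))) * star V := by
    rw [Matrix.mul_sub, Matrix.sub_mul]
    congr 1
    · rw [Matrix.mul_smul, mul_one, Matrix.smul_mul, mul_star_self_eigU h]
    · conv_lhs => rw [h.spectral_theorem]
      rw [Unitary.conjStarAlgAut_apply, mul_assoc, mul_assoc, hV]
      rfl
  rw [key, Matrix.det_mul, Matrix.det_mul, mul_comm, ← mul_assoc, ← Matrix.det_mul,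
    star_mul_self_eigU h, Matrix.det_one, one_mul]
  have : z • (1 : Matrix n n ℂ) - Matrix.diagonal (fun i => (h.eigenvalues i : ℂ)) =
      Matrix.diagonal (fun i => z - (h.eigenvalues i : ℂ)) := by
    rw [← Matrix.diagonal_one, ← Matrix.diagonal_smul, Matrix.diagonal_sub]
    simp
  rw [this, Matrix.det_diagonal]

lemma trace_msqrt_comm (A : Matrix n n ℂ) :
    (msqrt (Aᴴ * A)).trace = (msqrt (A * Aᴴ)).trace := by
  have hP := Matrix.posSemidef_conjTranspose_mul_self A
  have hQ := Matrix.posSemidef_self_mul_conjTranspose A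
  set mP : Multiset ℂ := Finset.univ.val.map (fun i => ((hP.1.eigenvalues i : ℝ) : ℂ)) with hmP
  set mQ : Multiset ℂ := Finset.univ.val.map (fun i => ((hQ.1.eigenvalues i : ℝ) : ℂ)) with hmQ
  have hprod : ∀ (z : ℂ) (m : Multiset ℂ),
      ((m.map (fun a => X - C a)).prod).eval z = (m.map (fun a => z - a)).prod := by
    intro z m
    rw [Polynomial.eval_multiset_prod, Multiset.map_map]
    congr 1
    ext a
    simp
  have hpq : (mP.map (fun a => X - C a)).prod = (mQ.map (fun a => X - C a)).prod := by
    apply Polynomial.funext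
    intro z
    rw [hprod, hprod, hmP, hmQ, Multiset.map_map, Multiset.map_map,
      ← Finset.prod_eq_multiset_prod, ← Finset.prod_eq_multiset_prod]
    have e1 := det_smul_one_sub_herm hP.1 z
    have e2 := det_smul_one_sub_herm hQ.1 z
    have e3 := det_smul_one_sub_comm Aᴴ A z
    simp only [Function.comp] at *
    rw [← e1, ← e2, e3]
  have hroots := congrArg Polynomial.roots hpq
  rw [Polynomial.roots_multiset_prod_X_sub_C, Polynomial.roots_multiset_prod_X_sub_C] at hroots
  have hsum := congrArg (fun m : Multiset ℂ =>
    (m.map (fun z : ℂ => ((Real.sqrt z.re : ℝ) : ℂ))).sum) hroots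
  simp only [hmP, hmQ, Multiset.map_map] at hsum
  unfold msqrt
  rw [trace_mfun _ hP.1, trace_mfun _ hQ.1, Finset.sum_eq_multiset_sum,
    Finset.sum_eq_multiset_sum]
  convert hsum using 3
  all_goals simp [Function.comp]

lemma trNorm_eq_re_trace {m : Type*} [Fintype m] (L : Matrix m n ℂ) :
    trNorm L = ((msqrt (Lᴴ * L)).trace).re := by
  unfold msqrt
  rw [trace_mfun _ (Matrix.posSemidef_conjTranspose_mul_self L).1]
  unfold trNorm singVals
  rw [Complex.re_sum]
  simp

variable {b e : Type*} [Fintype b] [Fintype e] [DecidableEq b] [DecidableEq e]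

omit [Fintype n] [DecidableEq n] in
lemma kron_conjTranspose {m' n' : Type*} (A : Matrix n n ℂ) (B : Matrix m' n' ℂ) :
    (A ⊗ₖ B)ᴴ = Aᴴ ⊗ₖ Bᴴ := by
  ext ⟨i1, i2⟩ ⟨j1, j2⟩
  simp [Matrix.conjTranspose_apply]

omit [DecidableEq b] in
lemma trace_mul_ptraceE (X : Matrix b b ℂ) (Z : Matrix (b × e) (b × e) ℂ) :
    (X * ptraceE Z).trace = ((X ⊗ₖ (1 : Matrix e e ℂ)) * Z).trace := by
  have lhs : (X * ptraceE Z).trace = ∑ i : b, ∑ j : b, ∑ k : e, X i j * Z (j, k) (i, k) := by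
    simp only [Matrix.trace, Matrix.diag, Matrix.mul_apply, ptraceE, Finset.mul_sum]
  have rhs : ((X ⊗ₖ (1 : Matrix e e ℂ)) * Z).trace
      = ∑ i : b, ∑ k : e, ∑ j : b, X i j * Z (j, k) (i, k) := by
    simp only [Matrix.trace, Matrix.diag, Matrix.mul_apply, Fintype.sum_prod_type,
      Matrix.kroneckerMap_apply, Matrix.one_apply, mul_ite, mul_one, mul_zero, ite_mul, zero_mul]
    refine Finset.sum_congr rfl fun i _ => Finset.sum_congr rfl fun k _ =>
      Finset.sum_congr rfl fun j _ => ?_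
    simp [Finset.sum_ite_eq, Finset.sum_ite_eq', Finset.mem_univ]
  rw [lhs, rhs]
  congr 1; ext i
  rw [Finset.sum_comm]

lemma eq_of_trace_pairing {B C : Matrix b b ℂ}
    (h : ∀ Y : Matrix b b ℂ, (Bᴴ * Y).trace = (Cᴴ * Y).trace) : B = C := by
  have key : ∀ (M : Matrix b b ℂ) (i j : b),
      (Mᴴ * Matrix.single i j 1).trace = star (M i j) := by
    intro M i j
    simp only [Matrix.trace, Matrix.diag, Matrix.mul_apply, Matrix.single,
      Matrix.conjTranspose_apply, Matrix.of_apply, mul_ite, mul_one, mul_zero]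
    simp [ite_and, Finset.sum_ite_eq, Finset.sum_ite_eq']
  ext i j
  have := h (Matrix.single i j 1)
  rw [key, key] at this
  exact star_injective this

omit [DecidableEq b] in
lemma ptraceE_posSemidef {Z : Matrix (b × e) (b × e) ℂ} (hZ : Z.PosSemidef) :
    (ptraceE Z).PosSemidef := by
  refine Matrix.posSemidef_iff_dotProduct_mulVec.mpr ⟨?_, ?_⟩
  · ext i j
    simp only [Matrix.conjTranspose_apply, ptraceE, star_sum]
    refine Finset.sum_congr rfl fun k _ => ?_
    conv_rhs => rw [← hZ.1]
    simp [Matrix.conjTranspose_apply]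
  · intro v
    have R : ∀ k : e, star (fun p : b × e => if p.2 = k then v p.1 else 0) ⬝ᵥ
          Z.mulVec (fun p : b × e => if p.2 = k then v p.1 else 0)
        = ∑ i : b, ∑ j : b, star (v i) * (Z (i, k) (j, k) * v j) := by
      intro k
      simp only [dotProduct, Matrix.mulVec, Pi.star_apply, Fintype.sum_prod_type,
        apply_ite star, star_zero, ite_mul, zero_mul, mul_ite, mul_zero,
        Finset.sum_ite_eq', Finset.mem_univ, if_true, Finset.mul_sum, Finset.sum_ite_irrel,
        Finset.sum_const_zero]
    have L : star v ⬝ᵥ (ptraceE Z).mulVec v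
        = ∑ i : b, ∑ j : b, ∑ k : e, star (v i) * (Z (i, k) (j, k) * v j) := by
      simp only [dotProduct, Matrix.mulVec, Pi.star_apply, ptraceE,
        Finset.sum_mul, Finset.mul_sum]
    rw [L]
    have swap1 : ∑ i : b, ∑ j : b, ∑ k : e, star (v i) * (Z (i, k) (j, k) * v j)
        = ∑ k : e, ∑ i : b, ∑ j : b, star (v i) * (Z (i, k) (j, k) * v j) := by
      calc ∑ i : b, ∑ j : b, ∑ k : e, star (v i) * (Z (i, k) (j, k) * v j)
          = ∑ i : b, ∑ k : e, ∑ j : b, star (v i) * (Z (i, k) (j, k) * v j) :=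
            Finset.sum_congr rfl fun i _ => Finset.sum_comm ..
        _ = ∑ k : e, ∑ i : b, ∑ j : b, star (v i) * (Z (i, k) (j, k) * v j) :=
            Finset.sum_comm ..
    rw [swap1]
    refine Finset.sum_nonneg fun k _ => ?_
    rw [← R k]
    exact hZ.dotProduct_mulVec_nonneg _

end Aux

set_option maxHeartbeats 1600000 in
/-- The `α = 1/2` Rényi relative entropy difference equals `-2 log F(ρ, P_{σ,N}(N(ρ)))`. -/
theorem renyi_half_eq_petz_fidelity {a b e : ℕ}
    (ρ σ : Matrix (Fin a) (Fin a) ℂ)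
    (hρ : ρ.PosSemidef) (hρ1 : ρ.trace = 1)
    (hσ : σ.PosSemidef) (hσ1 : σ.trace = 1) (hsupp : suppLE ρ σ)
    (Φ : Matrix (Fin a) (Fin a) ℂ →ₗ[ℂ] Matrix (Fin b) (Fin b) ℂ)
    (U : Matrix (Fin b × Fin e) (Fin a) ℂ) (hU : Uᴴ * U = 1)
    (hext : ∀ M, Φ M = ptraceE (U * M * Uᴴ))
    (Φdag : Matrix (Fin b) (Fin b) ℂ →ₗ[ℂ] Matrix (Fin a) (Fin a) ℂ)
    (hadj : IsAdjointPair Φ Φdag) :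
    -2 * Real.log (trNorm
        (((msqrt (Φ ρ) * minvsqrt (Φ σ)) ⊗ₖ (1 : Matrix (Fin e) (Fin e) ℂ)) *
          U * msqrt σ * msqrt ρ)) =
      -2 * Real.log (fid ρ (petz σ (Φ σ) Φdag (Φ ρ))) := by
  have hΦσ : (Φ σ).PosSemidef := by
    rw [hext]; exact ptraceE_posSemidef (hσ.mul_mul_conjTranspose_same U)
  have hΦρ : (Φ ρ).PosSemidef := by
    rw [hext]; exact ptraceE_posSemidef (hρ.mul_mul_conjTranspose_same U)
  have hdag : ∀ X : Matrix (Fin b) (Fin b) ℂ,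
      Φdag X = Uᴴ * (X ⊗ₖ (1 : Matrix (Fin e) (Fin e) ℂ)) * U := by
    intro X
    refine eq_of_trace_pairing fun Y => ?_
    rw [← hadj X Y, hext, trace_mul_ptraceE]
    have h1 : (Uᴴ * (X ⊗ₖ (1 : Matrix (Fin e) (Fin e) ℂ)) * U)ᴴ
        = Uᴴ * (Xᴴ ⊗ₖ (1 : Matrix (Fin e) (Fin e) ℂ)) * U := by
      rw [conjTranspose_mul, conjTranspose_mul, conjTranspose_conjTranspose,
        kron_conjTranspose, conjTranspose_one]
      simp only [Matrix.mul_assoc]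
    rw [h1, show (Xᴴ ⊗ₖ (1 : Matrix (Fin e) (Fin e) ℂ)) * (U * Y * Uᴴ)
        = ((Xᴴ ⊗ₖ (1 : Matrix (Fin e) (Fin e) ℂ)) * U * Y) * Uᴴ by simp only [Matrix.mul_assoc],
      Matrix.trace_mul_comm]
    simp only [Matrix.mul_assoc]
  set G := msqrt (Φ ρ) * minvsqrt (Φ σ) with hG
  set Bm := (G ⊗ₖ (1 : Matrix (Fin e) (Fin e) ℂ)) * U * msqrt σ with hBm
  set ω := petz σ (Φ σ) Φdag (Φ ρ) with hωdef
  have hGG : Gᴴ * G = minvsqrt (Φ σ) * (Φ ρ) * minvsqrt (Φ σ) := by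
    rw [hG, conjTranspose_mul, msqrt_conjTranspose hΦρ.1, minvsqrt_conjTranspose hΦσ.1]
    simp only [Matrix.mul_assoc]
    rw [← Matrix.mul_assoc (msqrt (Φ ρ)) (msqrt (Φ ρ)), msqrt_mul_self hΦρ]
  have hω : ω = Bmᴴ * Bm := by
    rw [hωdef]
    unfold petz
    rw [hdag, hBm]
    rw [conjTranspose_mul, conjTranspose_mul, kron_conjTranspose, conjTranspose_one,
      msqrt_conjTranspose hσ.1]
    simp only [← Matrix.mul_assoc]
    rw [Matrix.mul_assoc (msqrt σ * Uᴴ) (Gᴴ ⊗ₖ (1 : Matrix (Fin e) (Fin e) ℂ)),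
      ← Matrix.mul_kronecker_mul, hGG, one_mul]
  have hωPSD : ω.PosSemidef := hω ▸ Matrix.posSemidef_conjTranspose_mul_self Bm
  have hTT : (Bm * msqrt ρ)ᴴ * (Bm * msqrt ρ) = msqrt ρ * (Bmᴴ * Bm) * msqrt ρ := by
    rw [conjTranspose_mul, msqrt_conjTranspose hρ.1]
    simp only [Matrix.mul_assoc]
  have hAA : (msqrt ρ * msqrt ω) * (msqrt ρ * msqrt ω)ᴴ
      = msqrt ρ * (Bmᴴ * Bm) * msqrt ρ := by
    rw [conjTranspose_mul, msqrt_conjTranspose hωPSD.1, msqrt_conjTranspose hρ.1]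
    simp only [Matrix.mul_assoc]
    rw [← Matrix.mul_assoc (msqrt ω) (msqrt ω), msqrt_mul_self hωPSD, hω]
    simp only [Matrix.mul_assoc]
  have hMT : ((msqrt (Φ ρ) * minvsqrt (Φ σ)) ⊗ₖ (1 : Matrix (Fin e) (Fin e) ℂ)) *
      U * msqrt σ * msqrt ρ = Bm * msqrt ρ := by
    rw [hBm, hG]
  rw [hMT]
  have key : trNorm (Bm * msqrt ρ) = trNorm (msqrt ρ * msqrt ω) := by
    rw [trNorm_eq_re_trace, trNorm_eq_re_trace, hTT]
    congr 1
    rw [← hAA, trace_msqrt_comm]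
  rw [key]
  unfold fid
  rfl
end

section
/- Trace norm contraction under projections: For a finite-dimensional Hilbert space, a density operator ω, and a projection Π, ‖Π ω Π − ω‖₁ ≤ 2√(1 − tr(Π ω)). -/
open scoped ENNReal Kronecker ComplexOrder
open Matrix MeasureTheory

section Aux2
open Polynomial


variable {m : Type*} [Fintype m] [DecidableEq m]

lemma gm_sign_mul_self (x : ℝ) : Real.sign x * x = |x| := by
  rcases lt_trichotomy x 0 with h | h | h
  · rw [Real.sign_of_neg h, abs_of_neg h]; ring
  · simp [h]
  · rw [Real.sign_of_pos h, abs_of_pos h]; ring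

lemma gmUmulstarU (U : Matrix.unitaryGroup m ℂ) :
    (U : Matrix m m ℂ) * star (U : Matrix m m ℂ) = 1 :=
  Matrix.mem_unitaryGroup_iff.mp U.2

lemma gmstarUmulU (U : Matrix.unitaryGroup m ℂ) :
    star (U : Matrix m m ℂ) * (U : Matrix m m ℂ) = 1 :=
  Matrix.mem_unitaryGroup_iff'.mp U.2

lemma gm_conj_mul_conj (U : Matrix.unitaryGroup m ℂ) (D E : Matrix m m ℂ) :
    ((U : Matrix m m ℂ) * D * star (U : Matrix m m ℂ)) *
      ((U : Matrix m m ℂ) * E * star (U : Matrix m m ℂ))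
      = (U : Matrix m m ℂ) * (D * E) * star (U : Matrix m m ℂ) := by
  simp only [Matrix.mul_assoc]
  rw [← Matrix.mul_assoc (star (U : Matrix m m ℂ)) (U : Matrix m m ℂ), gmstarUmulU,
    Matrix.one_mul]

lemma gm_trace_conj (U : Matrix.unitaryGroup m ℂ) (D : Matrix m m ℂ) :
    ((U : Matrix m m ℂ) * D * star (U : Matrix m m ℂ)).trace = D.trace := by
  rw [Matrix.trace_mul_cycle, gmstarUmulU, Matrix.one_mul]

lemma gm_conj_conjTranspose (U : Matrix.unitaryGroup m ℂ) (D : Matrix m m ℂ) :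
    ((U : Matrix m m ℂ) * D * star (U : Matrix m m ℂ))ᴴ
      = (U : Matrix m m ℂ) * Dᴴ * star (U : Matrix m m ℂ) := by
  simp only [Matrix.conjTranspose_mul, ← Matrix.star_eq_conjTranspose, star_star,
    StarMul.star_mul, Matrix.mul_assoc]

lemma gm_det_conj_diag (U : Matrix.unitaryGroup m ℂ) (d : m → ℝ) (x : ℂ) :
    (x • (1 : Matrix m m ℂ) - (U : Matrix m m ℂ) * diagonal (fun i => (d i : ℂ)) *
        star (U : Matrix m m ℂ)).det = ∏ i, (x - (d i : ℂ)) := by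
  have h1 : x • (1 : Matrix m m ℂ) - (U : Matrix m m ℂ) * diagonal (fun i => (d i : ℂ)) *
      star (U : Matrix m m ℂ)
      = (U : Matrix m m ℂ) * diagonal (fun i => x - (d i : ℂ)) * star (U : Matrix m m ℂ) := by
    have e : diagonal (fun i => x - (d i : ℂ)) =
        x • (1 : Matrix m m ℂ) - diagonal (fun i => (d i : ℂ)) := by
      ext i j
      rcases eq_or_ne i j with h | h
      · subst h; simp
      · simp [Matrix.diagonal_apply_ne _ h, Matrix.one_apply_ne h]
    rw [e, Matrix.mul_sub, Matrix.sub_mul]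
    congr 1
    rw [Matrix.mul_smul, Matrix.smul_mul, Matrix.mul_one, gmUmulstarU]
  rw [h1, Matrix.det_mul, Matrix.det_mul, mul_comm, ← mul_assoc, ← Matrix.det_mul,
    gmstarUmulU, Matrix.det_one, one_mul, Matrix.det_diagonal]

lemma gm_eig_multiset {B : Matrix m m ℂ} (hB : B.IsHermitian)
    (U : Matrix.unitaryGroup m ℂ) (d : m → ℝ)
    (hBd : B = (U : Matrix m m ℂ) * diagonal (fun i => (d i : ℂ)) * star (U : Matrix m m ℂ)) :
    Finset.univ.val.map hB.eigenvalues = Finset.univ.val.map d := by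
  have hspec : B = (hB.eigenvectorUnitary : Matrix m m ℂ) *
      diagonal (fun i => (hB.eigenvalues i : ℂ)) * star (hB.eigenvectorUnitary : Matrix m m ℂ) :=
    hB.spectral_theorem
  have key : ∀ x : ℂ, ∏ i, (x - (hB.eigenvalues i : ℂ)) = ∏ i, (x - (d i : ℂ)) := by
    intro x
    rw [← gm_det_conj_diag U d x, ← gm_det_conj_diag hB.eigenvectorUnitary hB.eigenvalues x,
      ← hspec, ← hBd]
  have hpoly : ((Finset.univ.val.map (fun i => ((hB.eigenvalues i : ℝ) : ℂ))).map
        (fun a => X - C a)).prod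
      = ((Finset.univ.val.map (fun i => ((d i : ℝ) : ℂ))).map (fun a => X - C a)).prod := by
    apply Polynomial.funext
    intro x
    rw [Polynomial.eval_multiset_prod, Polynomial.eval_multiset_prod]
    simp only [Multiset.map_map, Function.comp_def, Polynomial.eval_sub, Polynomial.eval_X,
      Polynomial.eval_C]
    rw [← Finset.prod_eq_multiset_prod, ← Finset.prod_eq_multiset_prod]
    exact key x
  have hroots := congrArg Polynomial.roots hpoly
  rw [Polynomial.roots_multiset_prod_X_sub_C, Polynomial.roots_multiset_prod_X_sub_C] at hroots
  have := congrArg (Multiset.map Complex.re) hroots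
  simpa [Multiset.map_map, Function.comp_def] using this

lemma gm_sum_g_eig {B : Matrix m m ℂ} (hB : B.IsHermitian)
    (U : Matrix.unitaryGroup m ℂ) (d : m → ℝ) (g : ℝ → ℝ)
    (hBd : B = (U : Matrix m m ℂ) * diagonal (fun i => (d i : ℂ)) * star (U : Matrix m m ℂ)) :
    ∑ i, g (hB.eigenvalues i) = ∑ i, g (d i) := by
  have h := gm_eig_multiset hB U d hBd
  calc ∑ i, g (hB.eigenvalues i)
      = (Multiset.map g (Finset.univ.val.map hB.eigenvalues)).sum := by
        rw [Multiset.map_map]; rfl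
    _ = (Multiset.map g (Finset.univ.val.map d)).sum := by rw [h]
    _ = ∑ i, g (d i) := by rw [Multiset.map_map]; rfl

lemma gm_trNorm_eq_sum_abs {A : Matrix m m ℂ} (hA : A.IsHermitian) :
    trNorm A = ∑ i, |hA.eigenvalues i| := by
  have hspec : A = (hA.eigenvectorUnitary : Matrix m m ℂ) *
      diagonal (fun i => (hA.eigenvalues i : ℂ)) * star (hA.eigenvectorUnitary : Matrix m m ℂ) :=
    hA.spectral_theorem
  have hsq : Aᴴ * A = (hA.eigenvectorUnitary : Matrix m m ℂ) *
      diagonal (fun i => ((hA.eigenvalues i ^ 2 : ℝ) : ℂ)) *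
      star (hA.eigenvectorUnitary : Matrix m m ℂ) := by
    rw [hA.eq]
    conv_lhs => rw [hspec]
    rw [gm_conj_mul_conj, Matrix.diagonal_mul_diagonal]
    congr 1
    congr 1
    funext i
    push_cast
    ring
  have h := gm_sum_g_eig (Matrix.posSemidef_conjTranspose_mul_self A).1 hA.eigenvectorUnitary
    (fun i => hA.eigenvalues i ^ 2) Real.sqrt hsq
  unfold trNorm singVals
  rw [h]
  exact Finset.sum_congr rfl fun i _ => Real.sqrt_sq_eq_abs _

lemma gm_trace_re_eq (X : Matrix m m ℂ) :
    ((Xᴴ * X).trace).re = ∑ i, ∑ j, ‖X j i‖ ^ 2 := by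
  have hpt : ∀ i j : m, (star (X j i) * X j i).re = ‖X j i‖ ^ 2 := fun i j => by
    rw [Complex.star_def, mul_comm, Complex.mul_conj]
    simp [Complex.sq_norm]
  simp [Matrix.trace, Matrix.diag, Matrix.mul_apply, Matrix.conjTranspose_apply,
    Complex.re_sum, Complex.sq_norm, Complex.normSq_apply]

lemma gm_trace_self_re_nonneg (X : Matrix m m ℂ) : 0 ≤ ((Xᴴ * X).trace).re := by
  rw [gm_trace_re_eq]
  positivity

lemma gm_trace_cs (X Y : Matrix m m ℂ) :
    ‖(Xᴴ * Y).trace‖ ≤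
      Real.sqrt (((Xᴴ * X).trace).re) * Real.sqrt (((Yᴴ * Y).trace).re) := by
  have htr : (Xᴴ * Y).trace = ∑ p : m × m, star (X p.2 p.1) * Y p.2 p.1 := by
    rw [Fintype.sum_prod_type]
    simp [Matrix.trace, Matrix.diag, Matrix.mul_apply, Matrix.conjTranspose_apply]
  have habs : ‖(Xᴴ * Y).trace‖ ≤
      ∑ p : m × m, ‖X p.2 p.1‖ * ‖Y p.2 p.1‖ := by
    rw [htr]
    refine (norm_sum_le _ _).trans_eq ?_
    refine Finset.sum_congr rfl fun p _ => ?_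
    rw [norm_mul, Complex.star_def, Complex.norm_conj]
  refine habs.trans ?_
  have hcs := Real.sum_mul_le_sqrt_mul_sqrt Finset.univ
    (fun p : m × m => ‖X p.2 p.1‖) (fun p : m × m => ‖Y p.2 p.1‖)
  refine hcs.trans_eq ?_
  rw [gm_trace_re_eq, gm_trace_re_eq, Fintype.sum_prod_type, Fintype.sum_prod_type]

lemma gm_trace_conj_sandwich_nonneg {M : Matrix m m ℂ} (hM : M.PosSemidef) (C : Matrix m m ℂ) :
    0 ≤ ((Cᴴ * M * C).trace).re := by
  obtain ⟨R, hR⟩ : ∃ R, M = Rᴴ * R := by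
    open scoped MatrixOrder in
    exact ⟨CFC.sqrt M, by rw [(CFC.sqrt_nonneg M).posSemidef.1.eq, CFC.sqrt_mul_sqrt_self M hM.nonneg]⟩
  have e : Cᴴ * M * C = (R * C)ᴴ * (R * C) := by
    rw [hR, Matrix.conjTranspose_mul]
    simp only [Matrix.mul_assoc]
  rw [e]
  exact gm_trace_self_re_nonneg _

end Aux2


/-- Trace-norm contraction under projections:
`‖ΠωΠ − ω‖₁ ≤ 2√(1 − tr(Πω))`. -/
theorem trNorm_proj_sandwich {n : ℕ}
    (P : Matrix (Fin n) (Fin n) ℂ) (hPidem : P * P = P) (hPherm : Pᴴ = P)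
    (ω : Matrix (Fin n) (Fin n) ℂ) (hω : ω.PosSemidef) (hω1 : ω.trace = 1) :
    trNorm (P * ω * P - ω) ≤ 2 * Real.sqrt (1 - ((P * ω).trace).re) := by
  classical
  have hωH : ωᴴ = ω := hω.1
  obtain ⟨S, hSH, hSS⟩ : ∃ S : Matrix (Fin n) (Fin n) ℂ, Sᴴ = S ∧ S * S = ω := by
    open scoped MatrixOrder in
    exact ⟨CFC.sqrt ω, (CFC.sqrt_nonneg ω).posSemidef.1, CFC.sqrt_mul_sqrt_self ω hω.nonneg⟩
  have hQH : ((1 : Matrix (Fin n) (Fin n) ℂ) - P)ᴴ = 1 - P := by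
    rw [Matrix.conjTranspose_sub, Matrix.conjTranspose_one, hPherm]
  have hP0 : P * ((1 : Matrix (Fin n) (Fin n) ℂ) - P) = 0 := by
    rw [mul_sub, mul_one, hPidem, sub_self]
  have hQidem : ((1 : Matrix (Fin n) (Fin n) ℂ) - P) * (1 - P) = 1 - P := by
    rw [sub_mul, one_mul, hP0, sub_zero]
  set A := P * ω * P - ω with hAdef
  have hA : A.IsHermitian := by
    have : Aᴴ = A := by
      rw [hAdef]
      simp only [Matrix.conjTranspose_sub, Matrix.conjTranspose_mul, hPherm, hωH,
        Matrix.mul_assoc]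
    exact this
  set U := hA.eigenvectorUnitary with hUdef
  set eig := hA.eigenvalues with heigdef
  set W := (U : Matrix (Fin n) (Fin n) ℂ) * diagonal (fun i => (Real.sign (eig i) : ℂ)) *
    star (U : Matrix (Fin n) (Fin n) ℂ) with hWdef
  have hspec : A = (U : Matrix (Fin n) (Fin n) ℂ) * diagonal (fun i => (eig i : ℂ)) *
      star (U : Matrix (Fin n) (Fin n) ℂ) := hA.spectral_theorem
  have hWH : Wᴴ = W := by
    have hst : star (fun i : Fin n => (Real.sign (eig i) : ℂ))
        = fun i : Fin n => (Real.sign (eig i) : ℂ) := by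
      funext i
      simp [Complex.conj_ofReal]
    rw [hWdef, gm_conj_conjTranspose, Matrix.diagonal_conjTranspose, hst]
  -- W * A and its trace
  have hWA : W * A = (U : Matrix (Fin n) (Fin n) ℂ) * diagonal (fun i => ((|eig i| : ℝ) : ℂ)) *
      star (U : Matrix (Fin n) (Fin n) ℂ) := by
    have hd : (fun i : Fin n => (Real.sign (eig i) : ℂ) * ((eig i : ℝ) : ℂ))
        = fun i : Fin n => ((|eig i| : ℝ) : ℂ) := by
      funext i
      rw [← Complex.ofReal_mul, gm_sign_mul_self]
    conv_lhs => rw [hWdef, hspec]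
    rw [gm_conj_mul_conj, Matrix.diagonal_mul_diagonal]
    simp only [hd]
  have htrWA : ((W * A).trace).re = trNorm A := by
    rw [hWA, gm_trace_conj, Matrix.trace_diagonal, gm_trNorm_eq_sum_abs hA, Complex.re_sum]
    simp
    rfl
  -- W * W
  have hWW : W * W = (U : Matrix (Fin n) (Fin n) ℂ) *
      diagonal (fun i => ((Real.sign (eig i) ^ 2 : ℝ) : ℂ)) *
      star (U : Matrix (Fin n) (Fin n) ℂ) := by
    rw [hWdef, gm_conj_mul_conj, Matrix.diagonal_mul_diagonal]
    congr 2
    funext i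
    push_cast
    ring
  have h1WW : ((1 : Matrix (Fin n) (Fin n) ℂ) - W * W).PosSemidef := by
    have e : (1 : Matrix (Fin n) (Fin n) ℂ) - W * W = (U : Matrix (Fin n) (Fin n) ℂ) *
        diagonal (fun i => ((1 - Real.sign (eig i) ^ 2 : ℝ) : ℂ)) *
        star (U : Matrix (Fin n) (Fin n) ℂ) := by
      have e2 : diagonal (fun i : Fin n => ((1 - Real.sign (eig i) ^ 2 : ℝ) : ℂ))
          = 1 - diagonal (fun i => ((Real.sign (eig i) ^ 2 : ℝ) : ℂ)) := by
        ext i j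
        rcases eq_or_ne i j with h | h
        · subst h
          simp only [Matrix.diagonal_apply_eq, Matrix.sub_apply, Matrix.one_apply_eq]
          push_cast
          ring
        · simp [Matrix.diagonal_apply_ne _ h, Matrix.one_apply_ne h]
      rw [e2, Matrix.mul_sub, Matrix.sub_mul, Matrix.mul_one, gmUmulstarU, hWW]
    rw [e]
    have hd : (diagonal (fun i : Fin n => ((1 - Real.sign (eig i) ^ 2 : ℝ) : ℂ))).PosSemidef := by
      refine Matrix.posSemidef_diagonal_iff.mpr fun i => Complex.zero_le_real.mpr ?_
      rcases Real.sign_apply_eq (eig i) with h | h | h <;> rw [h] <;> norm_num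
    simpa [Matrix.star_eq_conjTranspose] using
      hd.mul_mul_conjTranspose_same (U : Matrix (Fin n) (Fin n) ℂ)
  -- trace splitting
  have key : (W * A).trace = -(((((1 : Matrix (Fin n) (Fin n) ℂ) - P) * W) * ω).trace +
      ((P * (W * ((1 : Matrix (Fin n) (Fin n) ℂ) - P))) * ω).trace) := by
    have e1 : (W * (P * ω * P)).trace = (P * (W * P * ω)).trace := by
      rw [show W * (P * ω * P) = (W * P * ω) * P by simp only [Matrix.mul_assoc],
        Matrix.trace_mul_comm]
    have e2 : ((((1 : Matrix (Fin n) (Fin n) ℂ) - P) * W) * ω) +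
        ((P * (W * ((1 : Matrix (Fin n) (Fin n) ℂ) - P))) * ω) = W * ω - P * (W * P * ω) := by
      simp only [Matrix.sub_mul, Matrix.mul_sub, Matrix.one_mul, Matrix.mul_one,
        Matrix.mul_assoc]
      abel
    have e3 := congrArg Matrix.trace e2
    rw [Matrix.trace_add, Matrix.trace_sub] at e3
    rw [hAdef, Matrix.mul_sub, Matrix.trace_sub, e1, e3]
    ring
  -- epsilon
  set t : ℝ := ((P * ω).trace).re with htdef
  have hf1 : ((((1 : Matrix (Fin n) (Fin n) ℂ) - P) * S)ᴴ *
      (((1 : Matrix (Fin n) (Fin n) ℂ) - P) * S)).trace = (((1 : Matrix (Fin n) (Fin n) ℂ) - P) * ω).trace := by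
    rw [Matrix.conjTranspose_mul, hSH, hQH]
    rw [show S * (1 - P) * ((1 - P) * S) = S * ((1 - P) * ((1 - P) * S)) by
      simp only [Matrix.mul_assoc], Matrix.trace_mul_comm]
    rw [show (1 - P) * ((1 - P) * S) * S = ((1 - P) * (1 - P)) * (S * S) by
      simp only [Matrix.mul_assoc], hQidem, hSS]
  have htr1P : ((((1 : Matrix (Fin n) (Fin n) ℂ) - P) * ω).trace).re = 1 - t := by
    rw [Matrix.sub_mul, Matrix.one_mul, Matrix.trace_sub, Complex.sub_re, hω1]
    simp [htdef]
  have hε : 0 ≤ 1 - t := by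
    rw [← htr1P, ← hf1]
    exact gm_trace_self_re_nonneg _
  have ht1 : t ≤ 1 := by linarith
  -- bound on tr((W S)ᴴ (W S))
  have hWS : (((W * S)ᴴ * (W * S)).trace).re ≤ 1 := by
    have h0 : 0 ≤ ((Sᴴ * ((1 : Matrix (Fin n) (Fin n) ℂ) - W * W) * S).trace).re :=
      gm_trace_conj_sandwich_nonneg h1WW S
    have e : Sᴴ * ((1 : Matrix (Fin n) (Fin n) ℂ) - W * W) * S = ω - (W * S)ᴴ * (W * S) := by
      rw [← hSS]
      simp only [Matrix.conjTranspose_mul, hWH, hSH, Matrix.mul_sub, Matrix.sub_mul,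
        Matrix.mul_one, Matrix.mul_assoc]
    rw [e, Matrix.trace_sub, Complex.sub_re] at h0
    have hre1 : (Matrix.trace ω).re = 1 := by rw [hω1]; simp
    linarith
  -- bound on tr((W P S)ᴴ (W P S))
  have hWPS : (((W * (P * S))ᴴ * (W * (P * S))).trace).re ≤ 1 := by
    have h0 : 0 ≤ (((P * S)ᴴ * ((1 : Matrix (Fin n) (Fin n) ℂ) - W * W) * (P * S)).trace).re :=
      gm_trace_conj_sandwich_nonneg h1WW (P * S)
    have e : (P * S)ᴴ * ((1 : Matrix (Fin n) (Fin n) ℂ) - W * W) * (P * S)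
        = (P * S)ᴴ * (P * S) - (W * (P * S))ᴴ * (W * (P * S)) := by
      simp only [Matrix.conjTranspose_mul, hWH, hSH, hPherm, Matrix.mul_sub, Matrix.sub_mul,
        Matrix.mul_one, Matrix.mul_assoc]
    have ePS : (((P * S)ᴴ * (P * S)).trace).re = t := by
      rw [Matrix.conjTranspose_mul, hSH, hPherm]
      rw [show S * P * (P * S) = S * (P * (P * S)) by simp only [Matrix.mul_assoc],
        Matrix.trace_mul_comm]
      rw [show P * (P * S) * S = (P * P) * (S * S) by simp only [Matrix.mul_assoc], hPidem, hSS,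
        htdef]
    rw [e, Matrix.trace_sub, Complex.sub_re, ePS] at h0
    linarith
  -- term 1
  have hT1 : ‖((((1 : Matrix (Fin n) (Fin n) ℂ) - P) * W) * ω).trace‖
      ≤ Real.sqrt (1 - t) := by
    have etr : ((((1 : Matrix (Fin n) (Fin n) ℂ) - P) * W) * ω).trace
        = ((((1 : Matrix (Fin n) (Fin n) ℂ) - P) * S)ᴴ * (W * S)).trace := by
      rw [← hSS, Matrix.conjTranspose_mul, hSH, hQH]
      rw [show ((1 - P) * W) * (S * S) = (((1 - P) * W) * S) * S by simp only [Matrix.mul_assoc],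
        Matrix.trace_mul_comm]
      simp only [Matrix.mul_assoc]
    rw [etr]
    refine (gm_trace_cs _ _).trans ?_
    have e1 : Real.sqrt (((((1 : Matrix (Fin n) (Fin n) ℂ) - P) * S)ᴴ *
        (((1 : Matrix (Fin n) (Fin n) ℂ) - P) * S)).trace).re = Real.sqrt (1 - t) := by
      rw [hf1, htr1P]
    rw [e1]
    have e2 : Real.sqrt (((W * S)ᴴ * (W * S)).trace).re ≤ 1 := Real.sqrt_le_one.mpr hWS
    calc Real.sqrt (1 - t) * Real.sqrt (((W * S)ᴴ * (W * S)).trace).re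
        ≤ Real.sqrt (1 - t) * 1 := by
          exact mul_le_mul_of_nonneg_left e2 (Real.sqrt_nonneg _)
      _ = Real.sqrt (1 - t) := mul_one _
  -- term 2
  have hT2 : ‖((P * (W * ((1 : Matrix (Fin n) (Fin n) ℂ) - P))) * ω).trace‖
      ≤ Real.sqrt (1 - t) := by
    have etr : ((P * (W * ((1 : Matrix (Fin n) (Fin n) ℂ) - P))) * ω).trace
        = ((W * (P * S))ᴴ * (((1 : Matrix (Fin n) (Fin n) ℂ) - P) * S)).trace := by
      rw [← hSS, Matrix.conjTranspose_mul, Matrix.conjTranspose_mul, hWH, hSH, hPherm]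
      rw [show (P * (W * (1 - P))) * (S * S) = ((P * (W * (1 - P))) * S) * S by
        simp only [Matrix.mul_assoc], Matrix.trace_mul_comm]
      simp only [Matrix.mul_assoc]
    rw [etr]
    refine (gm_trace_cs _ _).trans ?_
    have eY : Real.sqrt (((((1 : Matrix (Fin n) (Fin n) ℂ) - P) * S)ᴴ *
        (((1 : Matrix (Fin n) (Fin n) ℂ) - P) * S)).trace).re = Real.sqrt (1 - t) := by
      rw [hf1, htr1P]
    rw [eY]
    have eX : Real.sqrt (((W * (P * S))ᴴ * (W * (P * S))).trace).re ≤ 1 :=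
      Real.sqrt_le_one.mpr hWPS
    calc Real.sqrt (((W * (P * S))ᴴ * (W * (P * S))).trace).re * Real.sqrt (1 - t)
        ≤ 1 * Real.sqrt (1 - t) := by
          exact mul_le_mul_of_nonneg_right eX (Real.sqrt_nonneg _)
      _ = Real.sqrt (1 - t) := one_mul _
  -- assemble
  have hfinal : trNorm A ≤ 2 * Real.sqrt (1 - t) := by
    rw [← htrWA]
    calc ((W * A).trace).re ≤ ‖(W * A).trace‖ := Complex.re_le_norm _
      _ = ‖(((((1 : Matrix (Fin n) (Fin n) ℂ) - P) * W) * ω).trace +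
          ((P * (W * ((1 : Matrix (Fin n) (Fin n) ℂ) - P))) * ω).trace)‖ := by
          rw [key, norm_neg]
      _ ≤ ‖((((1 : Matrix (Fin n) (Fin n) ℂ) - P) * W) * ω).trace‖ +
          ‖((P * (W * ((1 : Matrix (Fin n) (Fin n) ℂ) - P))) * ω).trace‖ :=
          norm_add_le _ _
      _ ≤ Real.sqrt (1 - t) + Real.sqrt (1 - t) := add_le_add hT1 hT2
      _ = 2 * Real.sqrt (1 - t) := by ring
  exact hfinal
end
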